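/- Let λ₁ > λ₂ > λ₃ > 0, set μᵢ = (λ₁+λ₂+λ₃)/2 − λᵢ, a = μ₂²+μ₃², b = μ₁²+μ₃², c = μ₁²+μ₂², and A = a x² + b y² + c z². Then for (x, y, z) ∈ ℝ³ with x² + y² + z² = 1, the following are equivalent: (i) there exists λ' ∈ ℝ with x·(a² − 2aA − λ') = 0, y·(b² − 2bA − λ') = 0, z·(c² − 2cA − λ') = 0, and there is NO ν ∈ ℝ with a x = ν x, b y = ν y, c z = ν z; (ii) exactly one coordinate is zero and the other two have squares equal to 1/2, i.e. (x = 0 ∧ y² = 1/2 ∧ z² = 1/2) ∨ (y = 0 ∧ x² = 1/2 ∧ z² = 1/2) ∨ (z = 0 ∧ x² = 1/2 ∧ y² = 1/2). (Paper's Theorem 3.1, case λ₁ > λ₂ > λ₃: the only non-harmonic biharmonic unit sections among left-invariant unit vector fields on SU(2) are the twelve vectors ±(1/√2)eᵢ ± (1/√2)eⱼ with i ≠ j.) -/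
import Mathlib


/-- Theorem 3.1, case λ₁ > λ₂ > λ₃ > 0: the only non-harmonic biharmonic unit
sections among left-invariant unit vector fields on SU(2) are the twelve vectors
±(1/√2)eᵢ ± (1/√2)eⱼ with i ≠ j (algebraic form). -/
theorem su2_generic_nonharmonic_biharmonic_sections
    (l₁ l₂ l₃ : ℝ) (h12 : l₁ > l₂) (h23 : l₂ > l₃) (h3 : 0 < l₃)
    (μ₁ μ₂ μ₃ : ℝ)
    (hμ₁ : μ₁ = (l₁ + l₂ + l₃) / 2 - l₁)
    (hμ₂ : μ₂ = (l₁ + l₂ + l₃) / 2 - l₂)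
    (hμ₃ : μ₃ = (l₁ + l₂ + l₃) / 2 - l₃)
    (a b c : ℝ)
    (ha : a = μ₂ ^ 2 + μ₃ ^ 2) (hb : b = μ₁ ^ 2 + μ₃ ^ 2) (hc : c = μ₁ ^ 2 + μ₂ ^ 2)
    (x y z : ℝ) (hxyz : x ^ 2 + y ^ 2 + z ^ 2 = 1)
    (A : ℝ) (hA : A = a * x ^ 2 + b * y ^ 2 + c * z ^ 2) :
    ((∃ l' : ℝ,
        x * (a ^ 2 - 2 * a * A - l') = 0 ∧
        y * (b ^ 2 - 2 * b * A - l') = 0 ∧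
        z * (c ^ 2 - 2 * c * A - l') = 0) ∧
      ¬ ∃ ν : ℝ, a * x = ν * x ∧ b * y = ν * y ∧ c * z = ν * z)
    ↔ ((x = 0 ∧ y ^ 2 = 1 / 2 ∧ z ^ 2 = 1 / 2) ∨
       (y = 0 ∧ x ^ 2 = 1 / 2 ∧ z ^ 2 = 1 / 2) ∨
       (z = 0 ∧ x ^ 2 = 1 / 2 ∧ y ^ 2 = 1 / 2)) := by
  have hab : b < a := by
    rw [ha, hb, hμ₁, hμ₂]
    nlinarith [mul_pos (sub_pos.2 h12) h3]
  have hbc : c < b := by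
    rw [hb, hc, hμ₂, hμ₃]
    nlinarith [mul_pos (sub_pos.2 h23) (lt_trans h3 (lt_trans h23 h12))]
  have hac : c < a := lt_trans hbc hab
  have hab' : a ≠ b := ne_of_gt hab
  have hbc' : b ≠ c := ne_of_gt hbc
  have hac' : a ≠ c := ne_of_gt hac
  constructor
  · rintro ⟨⟨l', hx, hy, hz⟩, hn⟩
    by_cases hx0 : x = 0 <;> by_cases hy0 : y = 0 <;> by_cases hz0 : z = 0
    · exfalso; rw [hx0, hy0, hz0] at hxyz; norm_num at hxyz
    · -- x = 0, y = 0, z ≠ 0 : harmonic, contradiction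
      exact absurd ⟨c, by rw [hx0]; ring, by rw [hy0]; ring, by ring⟩ hn
    · -- x = 0, y ≠ 0, z = 0 : harmonic
      exact absurd ⟨b, by rw [hx0]; ring, by ring, by rw [hz0]; ring⟩ hn
    · -- x = 0, y ≠ 0, z ≠ 0
      left
      subst hx0
      have h1 : b ^ 2 - 2 * b * A - l' = 0 := (mul_eq_zero.mp hy).resolve_left hy0
      have h2 : c ^ 2 - 2 * c * A - l' = 0 := (mul_eq_zero.mp hz).resolve_left hz0
      have hA2 : b + c - 2 * A = 0 := by
        rcases mul_eq_zero.mp (show (b - c) * (b + c - 2 * A) = 0 by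
          linear_combination h1 - h2) with h | h
        · exact absurd (sub_eq_zero.mp h) hbc'
        · exact h
      have hy2 : y ^ 2 = 1 / 2 := by
        rcases mul_eq_zero.mp (show (b - c) * (1 - 2 * y ^ 2) = 0 by
          linear_combination hA2 + 2 * hA + 2 * c * hxyz) with h | h
        · exact absurd (sub_eq_zero.mp h) hbc'
        · linarith
      norm_num at hxyz
      exact ⟨rfl, hy2, by linarith⟩
    · -- x ≠ 0, y = 0, z = 0 : harmonic
      exact absurd ⟨a, by ring, by rw [hy0]; ring, by rw [hz0]; ring⟩ hn
    · -- x ≠ 0, y = 0, z ≠ 0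
      right; left
      subst hy0
      have h1 : a ^ 2 - 2 * a * A - l' = 0 := (mul_eq_zero.mp hx).resolve_left hx0
      have h2 : c ^ 2 - 2 * c * A - l' = 0 := (mul_eq_zero.mp hz).resolve_left hz0
      have hA2 : a + c - 2 * A = 0 := by
        rcases mul_eq_zero.mp (show (a - c) * (a + c - 2 * A) = 0 by
          linear_combination h1 - h2) with h | h
        · exact absurd (sub_eq_zero.mp h) hac'
        · exact h
      have hx2 : x ^ 2 = 1 / 2 := by
        rcases mul_eq_zero.mp (show (a - c) * (1 - 2 * x ^ 2) = 0 by
          linear_combination hA2 + 2 * hA + 2 * c * hxyz) with h | h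
        · exact absurd (sub_eq_zero.mp h) hac'
        · linarith
      norm_num at hxyz
      exact ⟨rfl, hx2, by linarith⟩
    · -- x ≠ 0, y ≠ 0, z = 0
      right; right
      subst hz0
      have h1 : a ^ 2 - 2 * a * A - l' = 0 := (mul_eq_zero.mp hx).resolve_left hx0
      have h2 : b ^ 2 - 2 * b * A - l' = 0 := (mul_eq_zero.mp hy).resolve_left hy0
      have hA2 : a + b - 2 * A = 0 := by
        rcases mul_eq_zero.mp (show (a - b) * (a + b - 2 * A) = 0 by
          linear_combination h1 - h2) with h | h
        · exact absurd (sub_eq_zero.mp h) hab'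
        · exact h
      have hx2 : x ^ 2 = 1 / 2 := by
        rcases mul_eq_zero.mp (show (a - b) * (1 - 2 * x ^ 2) = 0 by
          linear_combination hA2 + 2 * hA + 2 * b * hxyz) with h | h
        · exact absurd (sub_eq_zero.mp h) hab'
        · linarith
      norm_num at hxyz
      exact ⟨rfl, hx2, by linarith⟩
    · -- all nonzero: impossible
      exfalso
      have h1 : a ^ 2 - 2 * a * A - l' = 0 := (mul_eq_zero.mp hx).resolve_left hx0
      have h2 : b ^ 2 - 2 * b * A - l' = 0 := (mul_eq_zero.mp hy).resolve_left hy0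
      have h3' : c ^ 2 - 2 * c * A - l' = 0 := (mul_eq_zero.mp hz).resolve_left hz0
      have hA2 : a + b - 2 * A = 0 := by
        rcases mul_eq_zero.mp (show (a - b) * (a + b - 2 * A) = 0 by
          linear_combination h1 - h2) with h | h
        · exact absurd (sub_eq_zero.mp h) hab'
        · exact h
      have hA3 : b + c - 2 * A = 0 := by
        rcases mul_eq_zero.mp (show (b - c) * (b + c - 2 * A) = 0 by
          linear_combination h2 - h3') with h | h
        · exact absurd (sub_eq_zero.mp h) hbc'
        · exact h
      exact hac' (by linarith)
  · rintro (⟨hx0, hy2, hz2⟩ | ⟨hy0, hx2, hz2⟩ | ⟨hz0, hx2, hy2⟩)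
    · have hAv : A = (b + c) / 2 := by rw [hA, hx0, hy2, hz2]; ring
      refine ⟨⟨b ^ 2 - 2 * b * A, by rw [hx0]; ring, by ring, by rw [hAv]; ring⟩, ?_⟩
      rintro ⟨ν, -, hνy, hνz⟩
      have hy0 : y ≠ 0 := fun h => by rw [h] at hy2; norm_num at hy2
      have hz0 : z ≠ 0 := fun h => by rw [h] at hz2; norm_num at hz2
      have e1 : b = ν := mul_right_cancel₀ hy0 hνy
      have e2 : c = ν := mul_right_cancel₀ hz0 hνz
      exact hbc' (by linarith)
    · have hAv : A = (a + c) / 2 := by rw [hA, hy0, hx2, hz2]; ring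
      refine ⟨⟨a ^ 2 - 2 * a * A, by ring, by rw [hy0]; ring, by rw [hAv]; ring⟩, ?_⟩
      rintro ⟨ν, hνx, -, hνz⟩
      have hx0 : x ≠ 0 := fun h => by rw [h] at hx2; norm_num at hx2
      have hz0 : z ≠ 0 := fun h => by rw [h] at hz2; norm_num at hz2
      have e1 : a = ν := mul_right_cancel₀ hx0 hνx
      have e2 : c = ν := mul_right_cancel₀ hz0 hνz
      exact hac' (by linarith)
    · have hAv : A = (a + b) / 2 := by rw [hA, hz0, hx2, hy2]; ring
      refine ⟨⟨a ^ 2 - 2 * a * A, by ring, by rw [hAv]; ring, by rw [hz0]; ring⟩, ?_⟩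
      rintro ⟨ν, hνx, hνy, -⟩
      have hx0 : x ≠ 0 := fun h => by rw [h] at hx2; norm_num at hx2
      have hy0 : y ≠ 0 := fun h => by rw [h] at hy2; norm_num at hy2
      have e1 : a = ν := mul_right_cancel₀ hx0 hνx
      have e2 : b = ν := mul_right_cancel₀ hy0 hνy
      exact hab' (by linarith)
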